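/- If X_1,…,X_n are independent random variables with mean zero and finite fourth moments, then Λ(X) ≤ 2 max_i E X_i^4. -/

import Mathlib

open MeasureTheory ProbabilityTheory Real
open scoped RealInnerProductSpace ENNReal Pointwise

noncomputable section

/-- The uniform (normalized rotation-invariant) probability measure `σ_{n-1}`
on the unit sphere `S^{n-1} ⊆ ℝⁿ`. -/
def sphereUniform (n : ℕ) : Measure (Metric.sphere (0 : EuclideanSpace ℝ (Fin n)) 1) :=
  ((volume : Measure (EuclideanSpace ℝ (Fin n))).toSphere Set.univ)⁻¹ •
    (volume : Measure (EuclideanSpace ℝ (Fin n))).toSphere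

/-- The standard normal distribution function `Φ`. -/
def stdNormalCDF (x : ℝ) : ℝ := ((gaussianReal 0 1) (Set.Iic x)).toReal

/-- The Kolmogorov distance `ρ(F,G) = sup_x |F(x) − G(x)|`. -/
def kolmogorovDist (F G : ℝ → ℝ) : ℝ := ⨆ x : ℝ, |F x - G x|

variable {Ω : Type*} [MeasurableSpace Ω] {n : ℕ}

/-- The distribution function of a real random variable `S` on `(Ω, μ)`. -/
def cdfOf (μ : Measure Ω) (S : Ω → ℝ) (x : ℝ) : ℝ := (μ {ω | S ω ≤ x}).toReal

/-- `X` is isotropic: the components have mean zero and identity covariance. -/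
def IsIsotropic (μ : Measure Ω) (X : Ω → EuclideanSpace ℝ (Fin n)) : Prop :=
  (∀ i, ∫ ω, X ω i ∂μ = 0) ∧
    ∀ i j, ∫ ω, X ω i * X ω j ∂μ = if i = j then (1 : ℝ) else 0

/-- The set of admissible constants `Λ` in the second order correlation condition
`Var(Σ_{i,j} a_{ij} X_i X_j) ≤ Λ Σ_{i,j} a_{ij}²`. -/
def corrSet (μ : Measure Ω) (X : Ω → EuclideanSpace ℝ (Fin n)) : Set ℝ :=
  {L | 0 ≤ L ∧ ∀ a : Fin n → Fin n → ℝ,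
    variance (fun ω => ∑ i, ∑ j, a i j * (X ω i * X ω j)) μ ≤ L * ∑ i, ∑ j, (a i j) ^ 2}

/-- `Λ(X)`: the smallest constant in the second order correlation condition. -/
def corrConst (μ : Measure Ω) (X : Ω → EuclideanSpace ℝ (Fin n)) : ℝ := sInf (corrSet μ X)

/-- `σ₄²(X) = Var(|X|²)/n`. -/
def sigma4sq (μ : Measure Ω) (X : Ω → EuclideanSpace ℝ (Fin n)) : ℝ :=
  (1 / (n : ℝ)) * variance (fun ω => ‖X ω‖ ^ 2) μ


section Aux
set_option linter.unusedSectionVars false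
variable {μ : Measure Ω} [IsProbabilityMeasure μ] {f : Fin n → Ω → ℝ}

theorem lonely (hind : iIndepFun f μ) (hm : ∀ i, Measurable (f i))
    (hmean : ∀ i, ∫ ω, f i ω ∂μ = 0)
    (u : ℝ × ℝ → ℝ) (hu : Measurable u) (i j t : Fin n) (hit : i ≠ t) (hjt : j ≠ t) :
    ∫ ω, u (f i ω, f j ω) * f t ω ∂μ = 0 := by
  have hInd : IndepFun (fun ω => u (f i ω, f j ω)) (f t) μ :=
    (hind.indepFun_prodMk hm i j t hit hjt).comp hu measurable_id
  have key := hInd.integral_mul_eq_mul_integral (hu.comp ((hm i).prodMk (hm j))).aestronglyMeasurable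
    (hm t).aestronglyMeasurable
  rw [hmean t, mul_zero] at key
  exact key

/-- centered square / product array -/
noncomputable def corrW (μ : Measure Ω) (f : Fin n → Ω → ℝ) (p : Fin n × Fin n) (ω : Ω) : ℝ :=
  if p.1 = p.2 then (f p.1 ω)^2 - ∫ ω', (f p.1 ω')^2 ∂μ else f p.1 ω * f p.2 ω

theorem orth_diag_off (hind : iIndepFun f μ)
    (hm : ∀ i, Measurable (f i)) (hmean : ∀ i, ∫ ω, f i ω ∂μ = 0)
    (i k l : Fin n) (hkl : k ≠ l) :
    ∫ ω, ((f i ω)^2 - (∫ ω', (f i ω')^2 ∂μ)) * (f k ω * f l ω) ∂μ = 0 := by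
  set c : ℝ := ∫ ω', (f i ω')^2 ∂μ with hc
  by_cases hik : i = k
  · subst hik
    have hil : i ≠ l := hkl
    have e : (fun ω => ((f i ω)^2 - c) * (f i ω * f l ω))
        = fun ω => (fun v : ℝ × ℝ => (v.1^2 - c) * v.2) (f i ω, f i ω) * f l ω := by
      funext ω; simp only; ring
    rw [e]
    exact lonely hind hm hmean _ (((measurable_fst.pow_const 2).sub_const c).mul measurable_snd)
      i i l hil hil
  · by_cases hil : i = l
    · subst hil
      have e : (fun ω => ((f i ω)^2 - c) * (f k ω * f i ω))
          = fun ω => (fun v : ℝ × ℝ => (v.1^2 - c) * v.2) (f i ω, f i ω) * f k ω := by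
        funext ω; simp only; ring
      rw [e]
      exact lonely hind hm hmean _
        (((measurable_fst.pow_const 2).sub_const c).mul measurable_snd) i i k
        hik hik
    · have e : (fun ω => ((f i ω)^2 - c) * (f k ω * f l ω))
          = fun ω => (fun v : ℝ × ℝ => (v.1^2 - c) * v.2) (f i ω, f k ω) * f l ω := by
        funext ω; simp only; ring
      rw [e]
      exact lonely hind hm hmean _
        (((measurable_fst.pow_const 2).sub_const c).mul measurable_snd) i k l hil hkl

theorem cent_indep (hind : iIndepFun f μ) (hm : ∀ i, Measurable (f i))
    (c d : ℝ) (i j : Fin n) (hij : i ≠ j) :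
    ∫ ω, ((f i ω)^2 - c) * ((f j ω)^2 - d) ∂μ
      = (∫ ω, ((f i ω)^2 - c) ∂μ) * ∫ ω, ((f j ω)^2 - d) ∂μ := by
  have hInd : IndepFun (fun ω => (f i ω)^2 - c) (fun ω => (f j ω)^2 - d) μ :=
    (hind.indepFun hij).comp ((measurable_id.pow_const 2).sub_const c)
      ((measurable_id.pow_const 2).sub_const d)
  exact hInd.integral_mul_eq_mul_integral (((hm i).pow_const 2).sub_const c).aestronglyMeasurable
    (((hm j).pow_const 2).sub_const d).aestronglyMeasurable

theorem offdiag_zero (hind : iIndepFun f μ) (hm : ∀ i, Measurable (f i))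
    (hmean : ∀ i, ∫ ω, f i ω ∂μ = 0) (i j : Fin n) (hij : i ≠ j) :
    ∫ ω, f i ω * f j ω ∂μ = 0 := by
  have key := (hind.indepFun hij).integral_mul_eq_mul_integral (hm i).aestronglyMeasurable
    (hm j).aestronglyMeasurable
  rw [hmean j, mul_zero] at key
  exact key

theorem four_zero (hind : iIndepFun f μ) (hm : ∀ i, Measurable (f i))
    (hmean : ∀ i, ∫ ω, f i ω ∂μ = 0) (i j k l : Fin n)
    (hij : i ≠ j) (hik : i ≠ k) (hil : i ≠ l) (hjk : j ≠ k) (hjl : j ≠ l) :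
    ∫ ω, (f i ω * f j ω) * (f k ω * f l ω) ∂μ = 0 := by
  have hInd := hind.indepFun_mul_mul hm i j k l hik hil hjk hjl
  have this := hInd.integral_mul_eq_mul_integral ((hm i).mul (hm j)).aestronglyMeasurable
    ((hm k).mul (hm l)).aestronglyMeasurable
  have h0 : integral μ (f i * f j) = 0 := offdiag_zero hind hm hmean i j hij
  rw [h0, zero_mul] at this
  exact this

theorem cent_mean_zero (h2 : ∀ i, Integrable (fun ω => (f i ω)^2) μ) (i : Fin n) :
    ∫ ω, ((f i ω)^2 - ∫ ω', (f i ω')^2 ∂μ) ∂μ = 0 := by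
  rw [integral_sub (h2 i) (integrable_const _), integral_const]
  simp

theorem orth (hind : iIndepFun f μ)
    (hm : ∀ i, Measurable (f i)) (hmean : ∀ i, ∫ ω, f i ω ∂μ = 0)
    (h2 : ∀ i, Integrable (fun ω => (f i ω)^2) μ)
    (p q : Fin n × Fin n) (hpq : p ≠ q) (hpq' : p ≠ q.swap) :
    ∫ ω, corrW μ f p ω * corrW μ f q ω ∂μ = 0 := by
  obtain ⟨i, j⟩ := p
  obtain ⟨k, l⟩ := q
  simp only [Prod.mk.injEq, Prod.swap_prod_mk, ne_eq, not_and] at hpq hpq'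
  by_cases hij : i = j
  · subst hij
    by_cases hkl : k = l
    · subst hkl
      have hik : i ≠ k := fun h => hpq h h
      simp only [corrW, eq_self_iff_true, if_true, ite_true]
      rw [cent_indep hind hm _ _ i k hik, cent_mean_zero h2, zero_mul]
    · -- p diag, q offdiag
      simp only [corrW, eq_self_iff_true, if_true, ite_true, hkl, ite_false, if_false]
      exact orth_diag_off hind hm hmean i k l hkl
  · by_cases hkl : k = l
    · subst hkl
      simp only [corrW, hij, ite_false, if_false, eq_self_iff_true, if_true, ite_true]
      have e : (fun ω => f i ω * f j ω * ((f k ω)^2 - ∫ ω', (f k ω')^2 ∂μ))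
          = fun ω => ((f k ω)^2 - ∫ ω', (f k ω')^2 ∂μ) * (f i ω * f j ω) := by
        funext ω; ring
      rw [e]
      exact orth_diag_off hind hm hmean k i j hij
    · -- both offdiag
      simp only [corrW, hij, hkl, ite_false, if_false]
      set c := (0:ℝ)
      by_cases hik : i = k
      · subst hik
        have hjl : j ≠ l := fun h => hpq rfl h
        have hil : i ≠ l := fun h => hkl h
        have e : (fun ω => f i ω * f j ω * (f i ω * f l ω))
            = fun ω => (fun v : ℝ × ℝ => v.1^2 * v.2) (f i ω, f j ω) * f l ω := by
          funext ω; simp only; ring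
        rw [e]
        exact lonely hind hm hmean _ ((measurable_fst.pow_const 2).mul measurable_snd)
          i j l hil hjl
      · by_cases hil : i = l
        · subst hil
          have hjk : j ≠ k := fun h => hpq' rfl h
          have e : (fun ω => f i ω * f j ω * (f k ω * f i ω))
              = fun ω => (fun v : ℝ × ℝ => v.1^2 * v.2) (f i ω, f j ω) * f k ω := by
            funext ω; simp only; ring
          rw [e]
          exact lonely hind hm hmean _ ((measurable_fst.pow_const 2).mul measurable_snd)
            i j k hik hjk
        · by_cases hjk : j = k
          · subst hjk
            have hjl : j ≠ l := hkl
            have e : (fun ω => f i ω * f j ω * (f j ω * f l ω))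
                = fun ω => (fun v : ℝ × ℝ => v.1^2 * v.2) (f j ω, f i ω) * f l ω := by
              funext ω; simp only; ring
            rw [e]
            exact lonely hind hm hmean _ ((measurable_fst.pow_const 2).mul measurable_snd)
              j i l hjl hil
          · by_cases hjl : j = l
            · subst hjl
              have e : (fun ω => f i ω * f j ω * (f k ω * f j ω))
                  = fun ω => (fun v : ℝ × ℝ => v.1^2 * v.2) (f j ω, f i ω) * f k ω := by
                funext ω; simp only; ring
              rw [e]
              exact lonely hind hm hmean _ ((measurable_fst.pow_const 2).mul measurable_snd)
                j i k hjk hik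
            · exact four_zero hind hm hmean i j k l hij hik hil hjk hjl

theorem sqL2 (g : Ω → ℝ) (hg : Measurable g) (h4 : Integrable (fun ω => (g ω)^4) μ) :
    MemLp (fun ω => (g ω)^2) 2 μ := by
  rw [memLp_two_iff_integrable_sq ((hg.pow_const 2).aestronglyMeasurable)]
  have e : (fun x : Ω => ((g x)^2)^2) = fun ω => (g ω)^4 := by funext ω; ring
  show Integrable (fun x : Ω => ((g x)^2)^2) μ
  rw [e]; exact h4

theorem mulInt (g h : Ω → ℝ) (hg : MemLp g 2 μ) (hh : MemLp h 2 μ) :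
    Integrable (fun ω => g ω * h ω) μ := by
  have := (hg.smul (𝕜 := ℝ) hh (q := 2) (p := 2) (r := 1)).integrable le_rfl
  have e : (h • g) = fun ω => g ω * h ω := by funext ω; simp [mul_comm]
  rw [e] at this; exact this

theorem mulL2 (g h : Ω → ℝ) (hgm : Measurable g) (hhm : Measurable h)
    (hg : Integrable (fun ω => (g ω)^4) μ) (hh : Integrable (fun ω => (h ω)^4) μ) :
    MemLp (fun ω => g ω * h ω) 2 μ := by
  rw [memLp_two_iff_integrable_sq (f := fun ω => g ω * h ω) ((hgm.mul hhm).aestronglyMeasurable)]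
  have e : (fun x : Ω => (g x * h x)^2) = fun ω => (g ω)^2 * (h ω)^2 := by
    funext ω; ring
  show Integrable (fun x : Ω => (g x * h x)^2) μ
  rw [e]
  exact mulInt _ _ (sqL2 g hgm hg) (sqL2 h hhm hh)

theorem cent_sq_int (g : Ω → ℝ) (hg : Measurable g) (h4 : Integrable (fun ω => (g ω)^4) μ)
    {c : ℝ} (hc : c = ∫ ω, (g ω)^2 ∂μ) :
    ∫ ω, ((g ω)^2 - c)^2 ∂μ = (∫ ω, (g ω)^4 ∂μ) - c^2 := by
  have h2 : Integrable (fun ω => (g ω)^2) μ := (sqL2 g hg h4).integrable one_le_two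
  have e : (fun ω => ((g ω)^2 - c)^2)
      = fun ω => ((g ω)^4 - (2*c) * (g ω)^2) + c^2 := by funext ω; ring
  have hI2 : Integrable (fun ω => (2*c) * (g ω)^2) μ := h2.const_mul (2*c)
  have hI1 : Integrable (fun ω => (g ω)^4 - (2*c) * (g ω)^2) μ := h4.sub hI2
  rw [e, integral_add hI1 (integrable_const _), integral_sub h4 hI2, MeasureTheory.integral_const_mul,
    integral_const]
  simp only [measure_univ, probReal_univ, ENNReal.toReal_one, smul_eq_mul, one_mul]
  rw [← hc]; ring

theorem csq_le (g : Ω → ℝ) (hg : Measurable g) (h4 : Integrable (fun ω => (g ω)^4) μ) :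
    (∫ ω, (g ω)^2 ∂μ)^2 ≤ ∫ ω, (g ω)^4 ∂μ := by
  have h0 : 0 ≤ ∫ ω, ((g ω)^2 - ∫ ω', (g ω')^2 ∂μ)^2 ∂μ :=
    integral_nonneg fun ω => sq_nonneg _
  rw [cent_sq_int g hg h4 rfl] at h0
  linarith

/-- L2 membership of corrW -/
theorem corrW_L2 (hm : ∀ i, Measurable (f i))
    (h4i : ∀ i, Integrable (fun ω => (f i ω)^4) μ) (p : Fin n × Fin n) :
    MemLp (corrW μ f p) 2 μ := by
  obtain ⟨i, j⟩ := p
  by_cases hij : i = j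
  · subst hij
    have e : corrW μ f (i, i) = fun ω => (f i ω)^2 - ∫ ω', (f i ω')^2 ∂μ := by
      funext ω; simp [corrW]
    rw [e]
    exact (sqL2 (f i) (hm i) (h4i i)).sub (memLp_const _)
  · have e : corrW μ f (i, j) = fun ω => f i ω * f j ω := by
      funext ω; simp [corrW, hij]
    rw [e]
    exact mulL2 (f i) (f j) (hm i) (hm j) (h4i i) (h4i j)

theorem corrW_sq_le (hind : iIndepFun f μ)
    (hm : ∀ i, Measurable (f i)) (h4i : ∀ i, Integrable (fun ω => (f i ω)^4) μ)
    {M : ℝ} (hM : ∀ i, ∫ ω, (f i ω)^4 ∂μ ≤ M) (p : Fin n × Fin n) :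
    ∫ ω, (corrW μ f p ω)^2 ∂μ ≤ M := by
  obtain ⟨i, j⟩ := p
  by_cases hij : i = j
  · subst hij
    simp only [corrW, eq_self_iff_true, if_true, ite_true]
    rw [cent_sq_int (f i) (hm i) (h4i i) rfl]
    have := hM i
    nlinarith [sq_nonneg (∫ ω', (f i ω')^2 ∂μ)]
  · simp only [corrW, hij, ite_false, if_false]
    have e : (fun ω => (f i ω * f j ω)^2) = fun ω => (f i ω)^2 * (f j ω)^2 := by
      funext ω; ring
    show (∫ ω, (fun ω => (f i ω * f j ω)^2) ω ∂μ) ≤ M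
    rw [e]
    have hInd : IndepFun (fun ω => (f i ω)^2) (fun ω => (f j ω)^2) μ :=
      (hind.indepFun hij).comp (measurable_id.pow_const 2) (measurable_id.pow_const 2)
    have hfac := hInd.integral_mul_eq_mul_integral ((hm i).pow_const 2).aestronglyMeasurable
      ((hm j).pow_const 2).aestronglyMeasurable
    have hfac' : ∫ ω, (f i ω)^2 * (f j ω)^2 ∂μ
        = (∫ ω, (f i ω)^2 ∂μ) * ∫ ω, (f j ω)^2 ∂μ := hfac
    rw [hfac']
    have hi0 : 0 ≤ ∫ ω, (f i ω)^2 ∂μ := integral_nonneg fun ω => sq_nonneg _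
    have hj0 : 0 ≤ ∫ ω, (f j ω)^2 ∂μ := integral_nonneg fun ω => sq_nonneg _
    have hi := csq_le (f i) (hm i) (h4i i)
    have hj := csq_le (f j) (hm j) (h4i j)
    have h4i0 : 0 ≤ ∫ ω, (f i ω)^4 ∂μ := le_trans (sq_nonneg _) hi
    nlinarith [hM i, hM j]

theorem corrW_swap (hind : iIndepFun f μ)
    (hm : ∀ i, Measurable (f i)) (h4i : ∀ i, Integrable (fun ω => (f i ω)^4) μ)
    {M : ℝ} (hM : ∀ i, ∫ ω, (f i ω)^4 ∂μ ≤ M) (p : Fin n × Fin n) (hp : p.1 ≠ p.2) :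
    0 ≤ ∫ ω, corrW μ f p ω * corrW μ f p.swap ω ∂μ ∧
      ∫ ω, corrW μ f p ω * corrW μ f p.swap ω ∂μ ≤ M := by
  obtain ⟨i, j⟩ := p
  simp only [Prod.swap_prod_mk] at *
  have hji : ¬ (j = i) := fun h => hp h.symm
  simp only [corrW, hp, hji, ite_false, if_false]
  have e : (fun ω => f i ω * f j ω * (f j ω * f i ω)) = fun ω => (f i ω)^2 * (f j ω)^2 := by
    funext ω; ring
  rw [show (∫ ω, f i ω * f j ω * (f j ω * f i ω) ∂μ)
      = ∫ ω, (f i ω)^2 * (f j ω)^2 ∂μ by rw [e]]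
  have hInd : IndepFun (fun ω => (f i ω)^2) (fun ω => (f j ω)^2) μ :=
    (hind.indepFun hp).comp (measurable_id.pow_const 2) (measurable_id.pow_const 2)
  have hfac' : ∫ ω, (f i ω)^2 * (f j ω)^2 ∂μ
      = (∫ ω, (f i ω)^2 ∂μ) * ∫ ω, (f j ω)^2 ∂μ :=
    hInd.integral_mul_eq_mul_integral ((hm i).pow_const 2).aestronglyMeasurable
      ((hm j).pow_const 2).aestronglyMeasurable
  rw [hfac']
  have hi0 : 0 ≤ ∫ ω, (f i ω)^2 ∂μ := integral_nonneg fun ω => sq_nonneg _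
  have hj0 : 0 ≤ ∫ ω, (f j ω)^2 ∂μ := integral_nonneg fun ω => sq_nonneg _
  have hi := csq_le (f i) (hm i) (h4i i)
  have hj := csq_le (f j) (hm j) (h4i j)
  have h4i0 : 0 ≤ ∫ ω, (f i ω)^4 ∂μ := le_trans (sq_nonneg _) hi
  constructor
  · positivity
  · nlinarith [hM i, hM j]

theorem key (hind : iIndepFun f μ)
    (hm : ∀ i, Measurable (f i)) (hmean : ∀ i, ∫ ω, f i ω ∂μ = 0)
    (h4i : ∀ i, Integrable (fun ω => (f i ω)^4) μ)
    {M : ℝ} (hM0 : 0 ≤ M) (hM : ∀ i, ∫ ω, (f i ω)^4 ∂μ ≤ M) (a : Fin n → Fin n → ℝ) :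
    variance (fun ω => ∑ i, ∑ j, a i j * (f i ω * f j ω)) μ
      ≤ (2*M) * ∑ i, ∑ j, (a i j)^2 := by
  classical
  set A : Fin n × Fin n → ℝ := fun p => a p.1 p.2 with hA
  set S : Ω → ℝ := fun ω => ∑ p : Fin n × Fin n, A p * (f p.1 ω * f p.2 ω) with hS
  have hXS : (fun ω => ∑ i, ∑ j, a i j * (f i ω * f j ω)) = S := by
    funext ω
    show _ = ∑ p : Fin n × Fin n, A p * (f p.1 ω * f p.2 ω)
    rw [Fintype.sum_prod_type]
  rw [hXS]
  have h2i : ∀ i, Integrable (fun ω => (f i ω)^2) μ :=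
    fun i => (sqL2 (f i) (hm i) (h4i i)).integrable one_le_two
  have hprodL2 : ∀ p : Fin n × Fin n, MemLp (fun ω => f p.1 ω * f p.2 ω) 2 μ :=
    fun p => mulL2 _ _ (hm p.1) (hm p.2) (h4i p.1) (h4i p.2)
  have hWL2 : ∀ p : Fin n × Fin n, MemLp (corrW μ f p) 2 μ := corrW_L2 hm h4i
  have hSL2 : MemLp S 2 μ := by
    rw [hS]
    exact memLp_finset_sum _ fun p _ => (hprodL2 p).const_mul (A p)
  have hIppInt : ∀ p : Fin n × Fin n, Integrable (fun ω => A p * (f p.1 ω * f p.2 ω)) μ :=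
    fun p => ((hprodL2 p).integrable one_le_two).const_mul _
  have hprodmean : ∀ p : Fin n × Fin n,
      ∫ ω, f p.1 ω * f p.2 ω ∂μ = if p.1 = p.2 then ∫ ω, (f p.1 ω)^2 ∂μ else 0 := by
    rintro ⟨i, j⟩
    by_cases h : i = j
    · subst h
      simp only [if_pos rfl]
      congr 1; funext ω; rw [sq]
    · simp only [h, if_false, ite_false]
      exact offdiag_zero hind hm hmean _ _ h
  have hES : ∫ ω, S ω ∂μ
      = ∑ p : Fin n × Fin n, A p * (if p.1 = p.2 then ∫ ω, (f p.1 ω)^2 ∂μ else 0) := by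
    rw [hS, integral_finset_sum _ fun p _ => hIppInt p]
    refine Finset.sum_congr rfl fun p _ => ?_
    rw [MeasureTheory.integral_const_mul, hprodmean p]
  have hWalt : ∀ (p : Fin n × Fin n) (ω : Ω), corrW μ f p ω
      = f p.1 ω * f p.2 ω - (if p.1 = p.2 then ∫ ω', (f p.1 ω')^2 ∂μ else 0) := by
    rintro ⟨i, j⟩ ω
    by_cases h : i = j
    · subst h
      simp only [corrW, if_pos rfl, ite_true, eq_self_iff_true]
      rw [sq]
    · simp [corrW, h]
  have hT : ∀ ω, S ω - ∫ ω', S ω' ∂μ = ∑ p : Fin n × Fin n, A p * corrW μ f p ω := by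
    intro ω
    rw [hES]
    have e1 : S ω = ∑ p : Fin n × Fin n, A p * (f p.1 ω * f p.2 ω) := by rw [hS]
    rw [e1, ← Finset.sum_sub_distrib]
    exact Finset.sum_congr rfl fun p _ => by rw [hWalt p ω, mul_sub]
  have hvar : variance S μ = ∫ ω, (∑ p : Fin n × Fin n, A p * corrW μ f p ω)^2 ∂μ := by
    rw [show variance S μ = ∫ ω, ((S - fun _ => ∫ x, S x ∂μ) ^ 2 : Ω → ℝ) ω ∂μ from variance_eq_integral hSL2.1.aemeasurable]
    congr 1
    funext ω
    simp only [Pi.pow_apply, Pi.sub_apply]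
    rw [← hT ω]
  have hIW : ∀ p q : Fin n × Fin n,
      Integrable (fun ω => (A p * corrW μ f p ω) * (A q * corrW μ f q ω)) μ :=
    fun p q => mulInt _ _ ((hWL2 p).const_mul _) ((hWL2 q).const_mul _)
  have hexp : ∫ ω, (∑ p : Fin n × Fin n, A p * corrW μ f p ω)^2 ∂μ
      = ∑ p : Fin n × Fin n, ∑ q : Fin n × Fin n,
          A p * A q * ∫ ω, corrW μ f p ω * corrW μ f q ω ∂μ := by
    have e : ∀ ω, (∑ p : Fin n × Fin n, A p * corrW μ f p ω)^2
        = ∑ p : Fin n × Fin n, ∑ q : Fin n × Fin n,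
            (A p * corrW μ f p ω) * (A q * corrW μ f q ω) := by
      intro ω; rw [sq, Finset.sum_mul_sum]
    simp_rw [e]
    rw [integral_finset_sum _ fun p _ => integrable_finset_sum _ fun q _ => hIW p q]
    refine Finset.sum_congr rfl fun p _ => ?_
    rw [integral_finset_sum _ fun q _ => hIW p q]
    refine Finset.sum_congr rfl fun q _ => ?_
    have e2 : (fun ω => (A p * corrW μ f p ω) * (A q * corrW μ f q ω))
        = fun ω => (A p * A q) * (corrW μ f p ω * corrW μ f q ω) := by funext ω; ring
    rw [e2, MeasureTheory.integral_const_mul]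
  have hIsq : ∀ p : Fin n × Fin n,
      ∫ ω, corrW μ f p ω * corrW μ f p ω ∂μ ≤ M := by
    intro p
    have e : (fun ω => corrW μ f p ω * corrW μ f p ω) = fun ω => (corrW μ f p ω)^2 := by
      funext ω; rw [sq]
    rw [show (∫ ω, corrW μ f p ω * corrW μ f p ω ∂μ) = ∫ ω, (corrW μ f p ω)^2 ∂μ by rw [e]]
    exact corrW_sq_le hind hm h4i hM p
  have hIsq0 : ∀ p : Fin n × Fin n, 0 ≤ ∫ ω, corrW μ f p ω * corrW μ f p ω ∂μ :=
    fun p => integral_nonneg fun ω => mul_self_nonneg _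
  have hperp : ∀ p : Fin n × Fin n,
      ∑ q : Fin n × Fin n, A p * A q * ∫ ω, corrW μ f p ω * corrW μ f q ω ∂μ
        ≤ M * (A p^2 + (A p^2 + A p.swap^2)/2) := by
    intro p
    have hzero : ∀ q ∈ (Finset.univ : Finset (Fin n × Fin n)),
        q ∉ ({p, p.swap} : Finset (Fin n × Fin n)) →
        A p * A q * ∫ ω, corrW μ f p ω * corrW μ f q ω ∂μ = 0 := by
      intro q _ hq
      simp only [Finset.mem_insert, Finset.mem_singleton] at hq
      push_neg at hq
      have h1 : p ≠ q := fun h => hq.1 h.symm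
      have h2 : p ≠ q.swap := fun h => hq.2 (by rw [h, Prod.swap_swap])
      rw [orth hind hm hmean h2i p q h1 h2, mul_zero]
    have hsub : ∑ q : Fin n × Fin n, A p * A q * ∫ ω, corrW μ f p ω * corrW μ f q ω ∂μ
        = ∑ q ∈ ({p, p.swap} : Finset (Fin n × Fin n)),
            A p * A q * ∫ ω, corrW μ f p ω * corrW μ f q ω ∂μ :=
      (Finset.sum_subset (Finset.subset_univ _) hzero).symm
    rw [hsub]
    by_cases hp : p.1 = p.2
    · have hsw : p.swap = p := by
        obtain ⟨i, j⟩ := p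
        simp only at hp
        subst hp
        rfl
      rw [hsw, Finset.pair_eq_singleton, Finset.sum_singleton]
      have h1 := hIsq p
      have h2 := hIsq0 p
      nlinarith [sq_nonneg (A p)]
    · have hne : p ≠ p.swap := fun h => hp (congrArg Prod.fst h)
      rw [Finset.sum_pair hne]
      obtain ⟨hs0, hsM⟩ := corrW_swap hind hm h4i hM p hp
      have h1 := hIsq p
      have h2 := hIsq0 p
      nlinarith [sq_nonneg (A p - A p.swap), sq_nonneg (A p + A p.swap),
        mul_nonneg hs0 (sq_nonneg (A p - A p.swap)),
        mul_nonneg (sub_nonneg.2 hsM)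
          (add_nonneg (sq_nonneg (A p)) (sq_nonneg (A p.swap))),
        mul_nonneg (sub_nonneg.2 h1) (sq_nonneg (A p))]
  have hswapsum : ∑ p : Fin n × Fin n, (A p.swap)^2 = ∑ p : Fin n × Fin n, (A p)^2 :=
    Fintype.sum_bijective Prod.swap Prod.swap_bijective _ _ fun p => rfl
  calc variance S μ
      = ∑ p : Fin n × Fin n, ∑ q : Fin n × Fin n,
          A p * A q * ∫ ω, corrW μ f p ω * corrW μ f q ω ∂μ := by rw [hvar, hexp]
    _ ≤ ∑ p : Fin n × Fin n, M * (A p^2 + (A p^2 + A p.swap^2)/2) :=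
        Finset.sum_le_sum fun p _ => hperp p
    _ = ∑ p : Fin n × Fin n, (M * A p^2 + (M/2) * A p^2 + (M/2) * (A p.swap)^2) := by
        refine Finset.sum_congr rfl fun p _ => ?_; ring
    _ = M * (∑ p : Fin n × Fin n, A p^2) + (M/2) * (∑ p : Fin n × Fin n, A p^2)
        + (M/2) * ∑ p : Fin n × Fin n, (A p.swap)^2 := by
        rw [Finset.sum_add_distrib, Finset.sum_add_distrib, ← Finset.mul_sum,
          ← Finset.mul_sum, ← Finset.mul_sum]
    _ = (2*M) * ∑ p : Fin n × Fin n, A p^2 := by rw [hswapsum]; ring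
    _ = (2*M) * ∑ i, ∑ j, (a i j)^2 := by rw [Fintype.sum_prod_type]

end Aux

theorem statement6 {Ω : Type*} [MeasurableSpace Ω] (μ : Measure Ω) [IsProbabilityMeasure μ]
    {n : ℕ} (hn : 1 ≤ n) (X : Ω → EuclideanSpace ℝ (Fin n)) (hX : Measurable X)
    (h4 : Integrable (fun ω => ‖X ω‖ ^ 4) μ)
    (hind : iIndepFun (fun i ω => X ω i) μ)
    (hmean : ∀ i, ∫ ω, X ω i ∂μ = 0) :
    corrConst μ X ≤ 2 * ⨆ i : Fin n, ∫ ω, (X ω i) ^ 4 ∂μ := by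
  classical
  have hmg : ∀ i : Fin n, Measurable fun ω => X ω i :=
    fun i => (measurable_pi_apply i).comp ((WithLp.measurable_ofLp 2 _).comp hX)
  have hcoord : ∀ (ω : Ω) (i : Fin n), (X ω i)^2 ≤ ‖X ω‖^2 := by
    intro ω i
    rw [EuclideanSpace.norm_eq, Real.sq_sqrt (Finset.sum_nonneg fun j _ => sq_nonneg _)]
    calc (X ω i)^2 = ‖X ω i‖^2 := by rw [Real.norm_eq_abs, sq_abs]
      _ ≤ ∑ j, ‖X ω j‖^2 :=
        Finset.single_le_sum (f := fun j => ‖X ω j‖^2) (fun j _ => sq_nonneg _)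
          (Finset.mem_univ i)
  have h4i : ∀ i : Fin n, Integrable (fun ω => (X ω i)^4) μ := by
    intro i
    refine h4.mono ((hmg i).pow_const 4).aestronglyMeasurable (ae_of_all _ fun ω => ?_)
    rw [Real.norm_eq_abs, Real.norm_eq_abs, abs_of_nonneg (a := (X ω i)^4) (by positivity),
      abs_of_nonneg (by positivity)]
    nlinarith [hcoord ω i, sq_nonneg (X ω i), sq_nonneg (‖X ω‖)]
  set M : ℝ := ⨆ i : Fin n, ∫ ω, (X ω i)^4 ∂μ with hMdef
  have hbdd : BddAbove (Set.range fun i : Fin n => ∫ ω, (X ω i)^4 ∂μ) :=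
    Set.Finite.bddAbove (Set.finite_range _)
  have hM : ∀ i : Fin n, ∫ ω, (X ω i)^4 ∂μ ≤ M := fun i => le_ciSup hbdd i
  have hM0 : 0 ≤ M :=
    le_trans (integral_nonneg fun ω => by positivity) (hM ⟨0, hn⟩)
  have hmem : (2*M) ∈ corrSet μ X := by
    refine ⟨by positivity, fun a => ?_⟩
    exact key hind hmg hmean h4i hM0 hM a
  have hbb : BddBelow (corrSet μ X) := ⟨0, fun L hL => hL.1⟩
  exact csInf_le hbb hmem
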